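/- Define ν(2k) := (1/F(ρ))·(ρF(ρ)²)^k·F̂_k for k ≥ 0 and ν(odd) = 0, where F̂ is the power series with coefficients F̂_k and F(x) = F̂(xF(x)²). Then the generating function of ν is G_ν(s) = F̂(ρF(ρ)²s²)/F(ρ) for s ∈ [0,1], and if F is differentiable at ρ with F'(ρ) < ∞, the mean of ν equals m_ν = 1/(1 + F(ρ)/(2ρF'(ρ))). In particular m_ν < 1 if F'(ρ) < ∞ and m_ν = 1 if and only if F'(ρ) = ∞ (interpreting the formula as a limit). -/

import Mathlib

open Filter Topology

lemma aux_hasSum (g : ℕ → ℝ) (hg : ∀ k, 0 ≤ g k) (y L : ℝ) (hy : 0 < y)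
    (hsum : Summable fun k => g k * y ^ k)
    (l : Filter ℝ) [hne : l.NeBot] (hl : l ≤ 𝓝[Set.Ico 0 y] y)
    (hslope : Tendsto (fun t => ((∑' k, g k * y ^ k) - ∑' k, g k * t ^ k) / (y - t)) l (𝓝 L)) :
    HasSum (fun k : ℕ => (k : ℝ) * g k * y ^ (k - 1)) L := by
  set B : ℕ → ℝ := fun k : ℕ => (k : ℝ) * g k * y ^ (k - 1) with hB
  set A : ℕ → ℝ → ℝ := fun k t => g k * ∑ i ∈ Finset.range k, y ^ i * t ^ (k - 1 - i) with hA
  have hBnn : ∀ k, 0 ≤ B k := fun k =>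
    mul_nonneg (mul_nonneg (Nat.cast_nonneg k) (hg k)) (pow_nonneg hy.le _)
  have hAform : ∀ t ∈ Set.Ico (0:ℝ) y, ∀ k, A k t = (g k * y ^ k - g k * t ^ k) / (y - t) := by
    intro t ht k
    have hyt : y - t ≠ 0 := sub_ne_zero.mpr (ne_of_gt ht.2)
    have hgeom := geom_sum₂_mul (R := ℝ) y t k
    rw [eq_div_iff hyt]
    simp only [hA]
    rw [mul_assoc, hgeom]
    ring
  have hsummt : ∀ t ∈ Set.Ico (0:ℝ) y, Summable fun k => g k * t ^ k := fun t ht =>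
    Summable.of_nonneg_of_le (fun k => mul_nonneg (hg k) (pow_nonneg ht.1 k))
      (fun k => mul_le_mul_of_nonneg_left (pow_le_pow_left₀ ht.1 ht.2.le k) (hg k)) hsum
  have hsummA : ∀ t ∈ Set.Ico (0:ℝ) y, Summable fun k => A k t := by
    intro t ht
    have : (fun k => A k t) = fun k => (g k * y ^ k - g k * t ^ k) / (y - t) :=
      funext (hAform t ht)
    rw [this]
    exact (hsum.sub (hsummt t ht)).div_const _
  have hQ : ∀ t ∈ Set.Ico (0:ℝ) y,
      ((∑' k, g k * y ^ k) - ∑' k, g k * t ^ k) / (y - t) = ∑' k, A k t := by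
    intro t ht
    rw [← Summable.tsum_sub hsum (hsummt t ht), div_eq_mul_inv, ← tsum_mul_right]
    exact tsum_congr fun k => ((hAform t ht k).trans (div_eq_mul_inv _ _)).symm
  have hmem : ∀ᶠ t in l, t ∈ Set.Ico (0:ℝ) y := hl self_mem_nhdsWithin
  have hAB : ∀ k, A k y = B k := by
    intro k
    have h1 : ∀ i ∈ Finset.range k, y ^ i * y ^ (k - 1 - i) = y ^ (k - 1) := by
      intro i hi
      rw [← pow_add]
      congr 1
      have := Finset.mem_range.mp hi
      omega
    simp only [hA, hB]
    rw [Finset.sum_congr rfl h1, Finset.sum_const, Finset.card_range, nsmul_eq_mul]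
    ring
  have hAnn : ∀ t ∈ Set.Ico (0:ℝ) y, ∀ k, 0 ≤ A k t := by
    intro t ht k
    exact mul_nonneg (hg k) (Finset.sum_nonneg fun i _ =>
      mul_nonneg (pow_nonneg hy.le i) (pow_nonneg ht.1 _))
  have hpart : ∀ N, ∑ k ∈ Finset.range N, B k ≤ L := by
    intro N
    have hc : Continuous fun t => ∑ k ∈ Finset.range N, A k t := by
      apply continuous_finset_sum
      intro k _
      exact continuous_const.mul (continuous_finset_sum _ fun i _ =>
        continuous_const.mul (continuous_pow _))
    have hcont : Tendsto (fun t => ∑ k ∈ Finset.range N, A k t) l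
        (𝓝 (∑ k ∈ Finset.range N, B k)) := by
      have := (hc.tendsto y).mono_left (hl.trans nhdsWithin_le_nhds)
      simpa [hAB] using this
    refine le_of_tendsto_of_tendsto hcont hslope ?_
    filter_upwards [hmem] with t ht
    rw [hQ t ht]
    exact Summable.sum_le_tsum _ (fun k _ => hAnn t ht k) (hsummA t ht)
  have hsumB : Summable B := summable_of_sum_range_le hBnn hpart
  have hTle : ∑' k, B k ≤ L := Summable.tsum_le_of_sum_range_le hsumB hpart
  have hAleB : ∀ t ∈ Set.Ico (0:ℝ) y, ∀ k, A k t ≤ B k := by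
    intro t ht k
    rw [← hAB k]
    simp only [hA]
    refine mul_le_mul_of_nonneg_left ?_ (hg k)
    refine Finset.sum_le_sum fun i _ => ?_
    exact mul_le_mul_of_nonneg_left (pow_le_pow_left₀ ht.1 ht.2.le _) (pow_nonneg hy.le i)
  have hLle : L ≤ ∑' k, B k := by
    refine le_of_tendsto hslope ?_
    filter_upwards [hmem] with t ht
    rw [hQ t ht]
    exact Summable.tsum_le_tsum (hAleB t ht) (hsummA t ht) hsumB
  have hfin : ∑' k, B k = L := le_antisymm hTle hLle
  exact hfin ▸ hsumB.hasSum

theorem stmt6 (f g : ℕ → ℝ) (r : ℝ) (hr : 0 < r)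
    (hf : ∀ k, 0 ≤ f k) (hg : ∀ k, 0 ≤ g k)
    (F Fh : ℝ → ℝ)
    (hF : ∀ x, F x = ∑' k, f k * x ^ k)
    (hFh : ∀ y, Fh y = ∑' k, g k * y ^ k)
    (hFrpos : 0 < F r)
    (hFr : Summable fun k => f k * r ^ k)
    (hrel : ∀ x ∈ Set.Icc 0 r, F x = Fh (x * F x ^ 2))
    (ν : ℕ → ℝ)
    (hν : ∀ n, ν n = if n % 2 = 0 then (1 / F r) * (r * F r ^ 2) ^ (n / 2) * g (n / 2) else 0)
    (Fr' : ℝ) (hFr' : HasDerivWithinAt F Fr' (Set.Iio r) r) (hFr'pos : 0 < Fr') :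
    (∀ s ∈ Set.Icc (0:ℝ) 1, (∑' n, ν n * s ^ n) = Fh (r * F r ^ 2 * s ^ 2) / F r) ∧
      HasSum (fun n : ℕ => (n : ℝ) * ν n) (1 / (1 + F r / (2 * r * Fr'))) ∧
      1 / (1 + F r / (2 * r * Fr')) < 1 := by
  have hFrne : F r ≠ 0 := ne_of_gt hFrpos
  set y : ℝ := r * F r ^ 2 with hy_def
  have hy0 : 0 < y := by
    rw [hy_def]; exact mul_pos hr (pow_pos hFrpos 2)
  -- F r = ∑' g k y^k, summability of g at y
  have hFry : F r = ∑' k, g k * y ^ k := by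
    have h := hrel r ⟨hr.le, le_refl r⟩
    rw [← hy_def] at h
    rwa [hFh] at h
  have hgsum : Summable fun k => g k * y ^ k := by
    by_contra h
    rw [tsum_eq_zero_of_not_summable h] at hFry
    exact hFrne hFry
  have inj2 : Function.Injective (fun k : ℕ => 2 * k) := fun a b h => by have h2 : 2 * a = 2 * b := h; omega
  -- Part 1
  have part1 : ∀ s : ℝ, (∑' n, ν n * s ^ n) = Fh (y * s ^ 2) / F r := by
    intro s
    have hsupp : Function.support (fun n => ν n * s ^ n) ⊆ Set.range fun k : ℕ => 2 * k := by
      intro n hn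
      simp only [Function.mem_support] at hn
      by_contra hm
      apply hn
      have hodd : n % 2 = 1 := by
        rcases Nat.mod_two_eq_zero_or_one n with h | h
        · exfalso; exact hm ⟨n / 2, by simp; omega⟩
        · exact h
      rw [hν, if_neg (by omega)]
      ring
    calc (∑' n, ν n * s ^ n) = ∑' k, ν (2 * k) * s ^ (2 * k) :=
          (Function.Injective.tsum_eq inj2 hsupp).symm
      _ = ∑' k, (1 / F r) * (g k * (y * s ^ 2) ^ k) := by
          refine tsum_congr fun k => ?_
          rw [hν]
          have h1 : (2 * k) % 2 = 0 := by omega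
          have h2 : (2 * k) / 2 = k := by omega
          rw [if_pos h1, h2, pow_mul, mul_pow]
          ring
      _ = (1 / F r) * ∑' k, g k * (y * s ^ 2) ^ k := tsum_mul_left
      _ = Fh (y * s ^ 2) / F r := by rw [← hFh]; ring
  -- basic facts about F on [0, r]
  have hFsub : ∀ x, 0 ≤ x → x ≤ r → 0 ≤ F x ∧ F x ≤ F r := by
    intro x hx0 hxr
    have hs : Summable (fun k => f k * x ^ k) :=
      Summable.of_nonneg_of_le (fun k => mul_nonneg (hf k) (pow_nonneg hx0 k))
        (fun k => mul_le_mul_of_nonneg_left (pow_le_pow_left₀ hx0 hxr k) (hf k)) hFr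
    constructor
    · rw [hF]; exact tsum_nonneg fun k => mul_nonneg (hf k) (pow_nonneg hx0 k)
    · rw [hF x, hF r]
      exact Summable.tsum_le_tsum
        (fun k => mul_le_mul_of_nonneg_left (pow_le_pow_left₀ hx0 hxr k) (hf k)) hs hFr
  -- the map P and its derivative
  set P : ℝ → ℝ := fun x => x * F x ^ 2 with hPdef
  set pd : ℝ := F r ^ 2 + 2 * r * F r * Fr' with hpd_def
  have hpd : 0 < pd := by
    rw [hpd_def]
    have h1 : 0 < 2 * r * F r * Fr' := by
      exact mul_pos (mul_pos (mul_pos two_pos hr) hFrpos) hFr'pos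
    have h2 : 0 < F r ^ 2 := pow_pos hFrpos 2
    linarith
  have hP' : HasDerivWithinAt P pd (Set.Iio r) r := by
    have hid : HasDerivWithinAt (fun x : ℝ => x) 1 (Set.Iio r) r := hasDerivWithinAt_id r _
    have := hid.fun_mul (hFr'.fun_pow 2)
    refine this.congr_deriv ?_
    push_cast
    ring
  have hPry : P r = y := by rw [hPdef, hy_def]
  -- slopes
  have hslopeF : Tendsto (slope F r) (𝓝[Set.Iio r] r) (𝓝 Fr') := by
    have h := hasDerivWithinAt_iff_tendsto_slope.mp hFr'
    rwa [Set.diff_singleton_eq_self (by simp)] at h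
  have hslopeP : Tendsto (slope P r) (𝓝[Set.Iio r] r) (𝓝 pd) := by
    have h := hasDerivWithinAt_iff_tendsto_slope.mp hP'
    rwa [Set.diff_singleton_eq_self (by simp)] at h
  have hmemx : ∀ᶠ x in 𝓝[Set.Iio r] r, x ∈ Set.Ioo 0 r := by
    filter_upwards [self_mem_nhdsWithin,
      (eventually_gt_nhds hr).filter_mono nhdsWithin_le_nhds] with x h1 h2
    exact ⟨h2, h1⟩
  have hPmem : ∀ᶠ x in 𝓝[Set.Iio r] r, P x ∈ Set.Ico 0 y := by
    filter_upwards [hmemx] with x hx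
    obtain ⟨hF0, hFle⟩ := hFsub x hx.1.le hx.2.le
    have hsq : F x ^ 2 ≤ F r ^ 2 := pow_le_pow_left₀ hF0 hFle 2
    constructor
    · exact mul_nonneg hx.1.le (sq_nonneg _)
    · show x * F x ^ 2 < y
      rw [hy_def]
      calc x * F x ^ 2 ≤ x * F r ^ 2 := mul_le_mul_of_nonneg_left hsq hx.1.le
        _ < r * F r ^ 2 := mul_lt_mul_of_pos_right hx.2 (pow_pos hFrpos 2)
  have hPt : Tendsto P (𝓝[Set.Iio r] r) (𝓝[Set.Ico 0 y] y) := by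
    rw [tendsto_nhdsWithin_iff]
    refine ⟨?_, hPmem⟩
    have h := hP'.continuousWithinAt
    rwa [ContinuousWithinAt, hPry] at h
  haveI : (Filter.map P (𝓝[Set.Iio r] r)).NeBot := Filter.map_neBot
  -- slope of Fh along the curve
  have hslopeQ : Tendsto (fun t => ((∑' k, g k * y ^ k) - ∑' k, g k * t ^ k) / (y - t))
      (Filter.map P (𝓝[Set.Iio r] r)) (𝓝 (Fr' / pd)) := by
    rw [Filter.tendsto_map'_iff]
    have hev : (fun x => slope F r x / slope P r x) =ᶠ[𝓝[Set.Iio r] r]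
        (fun t => ((∑' k, g k * y ^ k) - ∑' k, g k * t ^ k) / (y - t)) ∘ P := by
      filter_upwards [hmemx, hPmem] with x hx hPx
      have hFx : (∑' k, g k * (P x) ^ k) = F x := by
        rw [← hFh (P x)]
        exact (hrel x ⟨hx.1.le, hx.2.le⟩).symm
      show slope F r x / slope P r x
          = ((∑' k, g k * y ^ k) - ∑' k, g k * (P x) ^ k) / (y - P x)
      rw [← hFry, hFx, slope_def_field, slope_def_field, ← hPry]
      have h1 : x - r ≠ 0 := sub_ne_zero.mpr (ne_of_lt hx.2)
      have h2 : P x - P r ≠ 0 := by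
        rw [hPry]; exact sub_ne_zero.mpr (ne_of_lt hPx.2)
      have h3 : P r - P x ≠ 0 := by
        rw [hPry]; exact sub_ne_zero.mpr (ne_of_gt hPx.2)
      field_simp
      ring
    exact Tendsto.congr' hev (hslopeF.div hslopeP (ne_of_gt hpd))
  have hT : HasSum (fun k : ℕ => (k : ℝ) * g k * y ^ (k - 1)) (Fr' / pd) :=
    aux_hasSum g hg y (Fr' / pd) hy0 hgsum (Filter.map P (𝓝[Set.Iio r] r)) hPt hslopeQ
  -- Part 2
  have h2rF : (0:ℝ) < 2 * r * Fr' := by positivity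
  have part2 : HasSum (fun n : ℕ => (n : ℝ) * ν n) (1 / (1 + F r / (2 * r * Fr'))) := by
    have hkey := hT.mul_left (2 * y / F r)
    have heq : (fun k : ℕ => (2 * y / F r) * ((k : ℝ) * g k * y ^ (k - 1)))
        = fun k : ℕ => (((2 * k : ℕ)) : ℝ) * ν (2 * k) := by
      funext k
      rw [hν]
      have h1 : (2 * k) % 2 = 0 := by omega
      have h2 : (2 * k) / 2 = k := by omega
      rw [if_pos h1, h2]
      cases k with
      | zero => simp
      | succ n =>
        have hys : y ^ (n + 1) = y ^ n * y := pow_succ y n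
        push_cast
        rw [hys]
        ring
    have hval : (2 * y / F r) * (Fr' / pd) = 1 / (1 + F r / (2 * r * Fr')) := by
      rw [hy_def, hpd_def]
      have h3 : F r ^ 2 + 2 * r * F r * Fr' ≠ 0 := by rw [← hpd_def]; exact ne_of_gt hpd
      have h4 : 2 * r * Fr' + F r ≠ 0 := by positivity
      field_simp
      ring
    rw [heq, hval] at hkey
    have h0 : ∀ n, n ∉ Set.range (fun k : ℕ => 2 * k) → (n : ℝ) * ν n = 0 := by
      intro n hn
      have hodd : n % 2 = 1 := by
        rcases Nat.mod_two_eq_zero_or_one n with h | h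
        · exfalso; exact hn ⟨n / 2, by simp; omega⟩
        · exact h
      rw [hν, if_neg (by omega)]
      ring
    exact (Function.Injective.hasSum_iff inj2 h0).mp hkey
  refine ⟨fun s _ => part1 s, part2, ?_⟩
  have hc : 0 < F r / (2 * r * Fr') := div_pos hFrpos h2rF
  rw [div_lt_one (by linarith)]
  linarith
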